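/- Let E be a set of equations, Φ a set of faults, φ : E → Set Φ, F(M) = ⋃_{e∈M} φ(e), and 𝒯 a family of subsets of E closed under unions of nonempty subfamilies. Then the map M ↦ F(M), restricted to the collection of RG sets, is a bijection onto the collection of fault signatures. -/
import Mathlib


open Set

/-- The fault signature map: faults appearing in a set of equations. -/
def faultsOf {E Φ : Type*} (φ : E → Set Φ) (M : Set E) : Set Φ := ⋃ e ∈ M, φ e

/-- A fault signature: a nonempty set of faults realized by some testable set. -/
def IsFaultSignature {E Φ : Type*} (φ : E → Set Φ) (𝒯 : Set (Set E)) (F₀ : Set Φ) : Prop :=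
  F₀.Nonempty ∧ ∃ M ∈ 𝒯, faultsOf φ M = F₀

/-- An RG set: a testable set with nonempty fault signature that contains every
testable set with the same fault signature. -/
def IsRGSet {E Φ : Type*} (φ : E → Set Φ) (𝒯 : Set (Set E)) (M : Set E) : Prop :=
  M ∈ 𝒯 ∧ (faultsOf φ M).Nonempty ∧
    ∀ M' ∈ 𝒯, faultsOf φ M' = faultsOf φ M → M' ⊆ M

lemma faultsOf_sUnion {E Φ : Type*} (φ : E → Set Φ) (𝒞 : Set (Set E)) :
    faultsOf φ (⋃₀ 𝒞) = ⋃ M ∈ 𝒞, faultsOf φ M := by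
  simp only [faultsOf, sUnion_eq_biUnion, biUnion_iUnion]

/-- If 𝒯 is closed under unions of nonempty subfamilies, then
`M ↦ F(M)` is a bijection from the collection of RG sets onto the collection of
fault signatures. -/
theorem stmt2_RG_sets_biject_with_fault_signatures
    {E Φ : Type*} (φ : E → Set Φ) (𝒯 : Set (Set E))
    (hclosed : ∀ 𝒞 ⊆ 𝒯, 𝒞.Nonempty → ⋃₀ 𝒞 ∈ 𝒯) :
    Set.BijOn (faultsOf φ) {M | IsRGSet φ 𝒯 M} {F₀ | IsFaultSignature φ 𝒯 F₀} := by
  constructor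
  · rintro M ⟨hM, hne, -⟩
    exact ⟨hne, M, hM, rfl⟩
  constructor
  · rintro M ⟨hM, hne, hmax⟩ N ⟨hN, hne2, hmax2⟩ heq
    exact subset_antisymm (hmax2 M hM heq) (hmax N hN heq.symm)
  · rintro F₀ ⟨hne, M, hM, hF⟩
    set 𝒞 : Set (Set E) := {N ∈ 𝒯 | faultsOf φ N = F₀} with h𝒞
    have h𝒞sub : 𝒞 ⊆ 𝒯 := fun N hN => hN.1
    have hM𝒞 : M ∈ 𝒞 := ⟨hM, hF⟩
    have hU : ⋃₀ 𝒞 ∈ 𝒯 := hclosed 𝒞 h𝒞sub ⟨M, hM𝒞⟩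
    have hFU : faultsOf φ (⋃₀ 𝒞) = F₀ := by
      rw [faultsOf_sUnion]
      apply subset_antisymm
      · exact iUnion₂_subset fun N hN => hN.2.subset
      · exact hF ▸ subset_biUnion_of_mem hM𝒞
    refine ⟨⋃₀ 𝒞, ⟨hU, hFU ▸ hne, ?_⟩, hFU⟩
    intro N hN hNF
    exact subset_sUnion_of_mem ⟨hN, hNF.trans hFU⟩
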